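/- The equation w² = 34·x⁴ + 34·y⁴ + 34·z⁴ has no solution (w, x, y, z) ∈ ℚ⁴ with (x, y, z) ≠ (0, 0, 0). -/

import Mathlib

open scoped NumberTheorySymbols

/-- `g² = 17·r²` has no solution with `r ≠ 0`. -/
private lemma sq_ne_17mul {g r : ℤ} (hr : r ≠ 0) : g ^ 2 ≠ 17 * r ^ 2 := by
  intro h
  have hg : g ≠ 0 := by
    intro hg0
    rw [hg0] at h
    have h2 : r ^ 2 = 0 := by nlinarith [sq_nonneg r]
    exact hr (pow_eq_zero_iff two_ne_zero |>.mp h2)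
  have hN : g.natAbs * g.natAbs = 17 * (r.natAbs * r.natAbs) := by
    have h3 := congrArg Int.natAbs h
    simpa [Int.natAbs_mul, Int.natAbs_pow, pow_two] using h3
  have hgn : g.natAbs ≠ 0 := Int.natAbs_ne_zero.mpr hg
  have hrn : r.natAbs ≠ 0 := Int.natAbs_ne_zero.mpr hr
  haveI : Fact (Nat.Prime 17) := ⟨by norm_num⟩
  have h1 : padicValNat 17 (g.natAbs * g.natAbs) =
      padicValNat 17 g.natAbs + padicValNat 17 g.natAbs :=
    padicValNat.mul hgn hgn
  have h2 : padicValNat 17 (17 * (r.natAbs * r.natAbs)) =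
      1 + (padicValNat 17 r.natAbs + padicValNat 17 r.natAbs) := by
    rw [padicValNat.mul (by norm_num) (mul_ne_zero hrn hrn),
      padicValNat.mul hrn hrn, padicValNat.self (by norm_num)]
  rw [hN, h2] at h1
  omega

/-- If 17 is a quadratic nonresidue mod a prime `q`, then nonzero values of `a² - 17b²`
have even `q`-adic valuation. -/
private lemma even_val17 {q : ℕ} (hq : q.Prime)
    (hns : ¬ IsSquare ((17 : ℤ) : ZMod q)) :
    ∀ n : ℕ, ∀ a b : ℤ, (a ^ 2 - 17 * b ^ 2).natAbs ≤ n → a ^ 2 - 17 * b ^ 2 ≠ 0 →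
      Even (padicValNat q (a ^ 2 - 17 * b ^ 2).natAbs) := by
  haveI : Fact q.Prime := ⟨hq⟩
  intro n
  induction n with
  | zero =>
    intro a b hle hne
    exact absurd (Int.natAbs_eq_zero.mp (Nat.le_zero.mp hle)) hne
  | succ n ih =>
    intro a b hle hne
    by_cases hdvd : (q : ℤ) ∣ (a ^ 2 - 17 * b ^ 2)
    · have hb : (q : ℤ) ∣ b := by
        by_contra hb
        apply hns
        have h0 : ((a : ZMod q)) ^ 2 = 17 * (b : ZMod q) ^ 2 := by
          have h1 : ((a ^ 2 - 17 * b ^ 2 : ℤ) : ZMod q) = 0 :=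
            (ZMod.intCast_zmod_eq_zero_iff_dvd _ q).mpr hdvd
          push_cast at h1
          linear_combination h1
        have hbz : (b : ZMod q) ≠ 0 := fun h =>
          hb ((ZMod.intCast_zmod_eq_zero_iff_dvd b q).mp h)
        have hinv : (b : ZMod q) * (b : ZMod q)⁻¹ = 1 :=
          ZMod.mul_inv_of_unit _ (Ne.isUnit hbz)
        refine ⟨(a : ZMod q) * ((b : ZMod q)⁻¹), ?_⟩
        push_cast
        linear_combination (-(((b : ZMod q)⁻¹) ^ 2)) * h0 +
          (-(17 : ZMod q) * ((b : ZMod q) * (b : ZMod q)⁻¹ + 1)) * hinv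
      have ha : (q : ℤ) ∣ a := by
        have h2 : (q : ℤ) ∣ a ^ 2 := by
          have heq : a ^ 2 = (a ^ 2 - 17 * b ^ 2) + 17 * b ^ 2 := by ring
          rw [heq]
          exact dvd_add hdvd (Dvd.dvd.mul_left (dvd_pow hb two_ne_zero) 17)
        exact (Nat.prime_iff_prime_int.mp hq).dvd_of_dvd_pow h2
      obtain ⟨a1, rfl⟩ := ha
      obtain ⟨b1, rfl⟩ := hb
      have key : ((q : ℤ) * a1) ^ 2 - 17 * ((q : ℤ) * b1) ^ 2
          = (q : ℤ) ^ 2 * (a1 ^ 2 - 17 * b1 ^ 2) := by ring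
      have hne' : a1 ^ 2 - 17 * b1 ^ 2 ≠ 0 := by
        intro h0
        apply hne
        rw [key, h0, mul_zero]
      have hbound : (a1 ^ 2 - 17 * b1 ^ 2).natAbs ≤ n := by
        have h4 : 4 ≤ q ^ 2 := by nlinarith [hq.two_le]
        have habs : (((q : ℤ) * a1) ^ 2 - 17 * ((q : ℤ) * b1) ^ 2).natAbs
            = q ^ 2 * (a1 ^ 2 - 17 * b1 ^ 2).natAbs := by
          rw [key, Int.natAbs_mul, Int.natAbs_pow, Int.natAbs_natCast]
        rw [habs] at hle
        have h1 : 1 ≤ (a1 ^ 2 - 17 * b1 ^ 2).natAbs :=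
          Nat.one_le_iff_ne_zero.mpr (Int.natAbs_ne_zero.mpr hne')
        nlinarith
      rw [key, Int.natAbs_mul, Int.natAbs_pow, Int.natAbs_natCast,
        padicValNat.mul (pow_ne_zero _ hq.pos.ne') (Int.natAbs_ne_zero.mpr hne'),
        padicValNat.prime_pow]
      obtain ⟨t, ht⟩ := ih a1 b1 hbound hne'
      exact ⟨t + 1, by omega⟩
    · rw [padicValNat.eq_zero_of_not_dvd]
      · exact Even.zero
      · intro h
        exact hdvd (Int.dvd_natAbs.mp (Int.natCast_dvd_natCast.mpr h))

/-- If every prime divisor of odd `M` either has 17 as a QR or divides `M` to even order,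
then `J(17 | M) = 1`. -/
private lemma jacobi17_one : ∀ M : ℕ, Odd M →
    (∀ p : ℕ, p.Prime → p ∣ M →
      p ≠ 17 ∧ (IsSquare ((17 : ℤ) : ZMod p) ∨ Even (M.factorization p))) →
    J((17 : ℤ) | M) = 1 := by
  intro M
  induction M using Nat.strong_induction_on with
  | _ M ih =>
    intro hModd hM
    rcases eq_or_ne M 1 with rfl | hM1
    · exact jacobiSym.one_right _
    have hM0 : M ≠ 0 := by rintro rfl; simp [Nat.odd_iff] at hModd
    set p := M.minFac with hpdef
    have hpp : p.Prime := Nat.minFac_prime hM1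
    have hpd : p ∣ M := Nat.minFac_dvd M
    obtain ⟨hp17, hcase⟩ := hM p hpp hpd
    have hp0 : p ≠ 0 := hpp.pos.ne'
    haveI : Fact p.Prime := ⟨hpp⟩
    rcases hcase with hsq | hev
    · obtain ⟨m, hm⟩ := hpd
      have hm0 : m ≠ 0 := by rintro rfl; rw [mul_zero] at hm; exact hM0 hm
      have hmlt : m < M := by
        rw [hm]
        exact (lt_mul_iff_one_lt_left (Nat.pos_of_ne_zero hm0)).mpr hpp.one_lt
      have hmodd : Odd m := by
        rw [hm, Nat.odd_mul] at hModd; exact hModd.2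
      have hone : J((17 : ℤ) | p) = 1 := by
        rw [← jacobiSym.legendreSym.to_jacobiSym]
        refine (legendreSym.eq_one_iff p ?_).mpr hsq
        intro h0
        have h17 : p ∣ 17 := by
          have h1 := (ZMod.intCast_zmod_eq_zero_iff_dvd (17 : ℤ) p).mp h0
          exact_mod_cast h1
        exact hp17 ((Nat.prime_dvd_prime_iff_eq hpp (by norm_num)).mp h17)
      rw [hm, jacobiSym.mul_right' _ hp0 hm0, hone, one_mul]
      refine ih m hmlt hmodd ?_
      intro q hq hqm
      have hqM : q ∣ M := hm ▸ hqm.mul_left p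
      obtain ⟨hq17, hc⟩ := hM q hq hqM
      refine ⟨hq17, ?_⟩
      rcases hc with h | h
      · exact Or.inl h
      rcases eq_or_ne q p with rfl | hqp
      · exact Or.inl hsq
      · right
        have hfac : M.factorization q = m.factorization q := by
          rw [hm, Nat.factorization_mul hp0 hm0]
          simp [hpp.factorization, Finsupp.single_apply, Ne.symm hqp]
        rwa [hfac] at h
    · have hv2 : 2 ≤ M.factorization p := by
        have hv1 : 1 ≤ M.factorization p := hpp.factorization_pos_of_dvd hM0 hpd
        obtain ⟨t, ht⟩ := hev
        omega
      have hp2d : p ^ 2 ∣ M := (pow_dvd_pow p hv2).trans (Nat.ordProj_dvd M p)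
      obtain ⟨m, hm⟩ := hp2d
      have hm0 : m ≠ 0 := by rintro rfl; rw [mul_zero] at hm; exact hM0 hm
      have hmlt : m < M := by
        rw [hm]
        refine (lt_mul_iff_one_lt_left (Nat.pos_of_ne_zero hm0)).mpr ?_
        nlinarith [hpp.two_le]
      have hmodd : Odd m := by
        rw [hm, Nat.odd_mul] at hModd; exact hModd.2
      have hsq1 : J((17 : ℤ) | p) ^ 2 = 1 := by
        have hgcd : (17 : ℤ).gcd p = 1 := by
          have hco : Nat.Coprime 17 p :=
            (Nat.coprime_primes (by norm_num) hpp).mpr (Ne.symm hp17)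
          simpa [Int.gcd] using hco
        rcases jacobiSym.eq_one_or_neg_one hgcd with h | h <;> rw [h] <;> norm_num
      rw [hm, jacobiSym.mul_right' _ (pow_ne_zero _ hp0) hm0, jacobiSym.pow_right,
        hsq1, one_mul]
      refine ih m hmlt hmodd ?_
      intro q hq hqm
      have hqM : q ∣ M := hm ▸ hqm.mul_left (p ^ 2)
      obtain ⟨hq17, hc⟩ := hM q hq hqM
      refine ⟨hq17, ?_⟩
      rcases hc with h | h
      · exact Or.inl h
      · right
        have hfac : M.factorization q = (p ^ 2).factorization q + m.factorization q := by
          rw [hm, Nat.factorization_mul (pow_ne_zero _ hp0) hm0]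
          simp
        rcases eq_or_ne q p with rfl | hqp
        · rw [hfac, hpp.factorization_pow, Finsupp.single_apply, if_pos rfl] at h
          rcases h with ⟨t, ht⟩
          exact ⟨t - 1, by omega⟩
        · rw [hfac, hpp.factorization_pow, Finsupp.single_apply, if_neg (Ne.symm hqp),
            zero_add] at h
          exact h

/-- Mod-17 selection: one of the three quadratics is a nonresidue. -/
private lemma sel17 : ∀ a b c : ZMod 17, a ^ 4 + b ^ 4 + c ^ 4 = 0 →
    ¬(a = 0 ∧ b = 0 ∧ c = 0) →
    (¬ IsSquare (a ^ 2 + (b - c) ^ 2) ∨ ¬ IsSquare (b ^ 2 + (c - a) ^ 2) ∨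
      ¬ IsSquare (c ^ 2 + (a - b) ^ 2)) := by decide

private lemma two_sq_zmod17 : IsSquare (2 : ZMod 17) := by decide

/-- Core contradiction for primitive integral solutions. -/
private lemma core (x y z r : ℤ) (hE : x ^ 4 + y ^ 4 + z ^ 4 = 34 * r ^ 2)
    (hgcd : ∀ p : ℕ, p.Prime → ¬((p : ℤ) ∣ x ∧ (p : ℤ) ∣ y ∧ (p : ℤ) ∣ z))
    (hQ : ¬ IsSquare ((x ^ 2 + (y - z) ^ 2 : ℤ) : ZMod 17)) : False := by
  haveI F17 : Fact (Nat.Prime 17) := ⟨by norm_num⟩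
  set N : ℤ := x ^ 2 + (y - z) ^ 2 with hNdef
  have hN17 : ((N : ℤ) : ZMod 17) ≠ 0 := by
    intro h0
    exact hQ (by rw [h0]; exact IsSquare.zero)
  have hNdvd : ¬ (17 : ℤ) ∣ N := fun hd =>
    hN17 ((ZMod.intCast_zmod_eq_zero_iff_dvd N 17).mpr hd)
  have hNne : N ≠ 0 := fun h => hNdvd (h ▸ dvd_zero _)
  have hr : r ≠ 0 := by
    intro hr0
    rw [hr0] at hE
    have hx4 : (0:ℤ) ≤ x ^ 4 := by positivity
    have hy4 : (0:ℤ) ≤ y ^ 4 := by positivity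
    have hz4 : (0:ℤ) ≤ z ^ 4 := by positivity
    have hx : x = 0 := by
      have h4 : x ^ 4 = 0 := by nlinarith
      exact pow_eq_zero_iff (by norm_num : (4:ℕ) ≠ 0) |>.mp h4
    have hy : y = 0 := by
      have h4 : y ^ 4 = 0 := by nlinarith
      exact pow_eq_zero_iff (by norm_num : (4:ℕ) ≠ 0) |>.mp h4
    have hz : z = 0 := by
      have h4 : z ^ 4 = 0 := by nlinarith
      exact pow_eq_zero_iff (by norm_num : (4:ℕ) ≠ 0) |>.mp h4
    exact hgcd 2 Nat.prime_two ⟨hx ▸ dvd_zero _, hy ▸ dvd_zero _, hz ▸ dvd_zero _⟩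
  set g1 : ℤ := x ^ 2 - y * z with hg1def
  set g2 : ℤ := y ^ 2 + z ^ 2 - y * z with hg2def
  set R1 : ℤ := (y + z) ^ 2 - x ^ 2 with hR1def
  set R2 : ℤ := x ^ 2 - (y - z) ^ 2 with hR2def
  have hI1 : N * R1 = 2 * (17 * r ^ 2 - g1 ^ 2) := by
    rw [hNdef, hR1def, hg1def]; linear_combination hE
  have hI2 : N * R2 = 2 * (17 * r ^ 2 - g2 ^ 2) := by
    rw [hNdef, hR2def, hg2def]; linear_combination hE
  have hD1ne : 17 * r ^ 2 - g1 ^ 2 ≠ 0 := by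
    intro h0
    exact sq_ne_17mul hr (by linarith : g1 ^ 2 = 17 * r ^ 2)
  have hD2ne : 17 * r ^ 2 - g2 ^ 2 ≠ 0 := by
    intro h0
    exact sq_ne_17mul hr (by linarith : g2 ^ 2 = 17 * r ^ 2)
  have hR1ne : R1 ≠ 0 := by
    intro h0
    rw [h0, mul_zero] at hI1
    exact hD1ne (by linarith)
  have hR2ne : R2 ≠ 0 := by
    intro h0
    rw [h0, mul_zero] at hI2
    exact hD2ne (by linarith)
  set n : ℕ := N.natAbs with hndef
  have hn0 : n ≠ 0 := Int.natAbs_ne_zero.mpr hNne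
  have hNnonneg : (0:ℤ) ≤ N := by rw [hNdef]; positivity
  have hnN : (n : ℤ) = N := Int.natAbs_of_nonneg hNnonneg
  have hn17 : ¬ (17 ∣ n) := by
    intro h
    apply hNdvd
    rw [← hnN]
    exact_mod_cast Int.natCast_dvd_natCast.mpr h
  set M : ℕ := ordCompl[2] n with hMdef
  have hM0 : M ≠ 0 := (Nat.ordCompl_pos 2 hn0).ne'
  have hMdvd : M ∣ n := Nat.ordCompl_dvd n 2
  have hM2 : ¬ 2 ∣ M := Nat.not_dvd_ordCompl Nat.prime_two hn0
  have hModd : Odd M := Nat.odd_iff.mpr (Nat.two_dvd_ne_zero.mp hM2)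
  have hM17 : ¬ (17 ∣ M) := fun h => hn17 (h.trans hMdvd)
  have hqint : ∀ q : ℕ, q.Prime → Prime (q : ℤ) := fun q hq => Nat.prime_iff_prime_int.mp hq
  have key : ∀ q : ℕ, q.Prime → q ∣ M →
      q ≠ 17 ∧ (IsSquare ((17 : ℤ) : ZMod q) ∨ Even (M.factorization q)) := by
    intro q hq hqM
    have hq17 : q ≠ 17 := fun h => hM17 (h ▸ hqM)
    refine ⟨hq17, ?_⟩
    by_cases hsq : IsSquare ((17 : ℤ) : ZMod q)
    · exact Or.inl hsq
    right
    haveI : Fact q.Prime := ⟨hq⟩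
    have hq2 : q ≠ 2 := by
      rintro rfl
      exact hM2 hqM
    have hfact : M.factorization q = padicValNat q n := by
      rw [hMdef, Nat.factorization_ordCompl n 2, Finsupp.erase_ne hq2,
        Nat.factorization_def n hq]
    by_contra hodd
    have hvn_odd : ¬ Even (padicValNat q n) := by rwa [hfact] at hodd
    have hvn_dvd : q ∣ n := by
      by_contra h
      exact hvn_odd (by rw [padicValNat.eq_zero_of_not_dvd h]; exact Even.zero)
    have hqN : (q : ℤ) ∣ N := by
      rw [← hnN]
      exact_mod_cast Int.natCast_dvd_natCast.mpr hvn_dvd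
    have hq2' : ¬ ((q:ℕ) ∣ 2) := fun h =>
      hq2 ((Nat.prime_dvd_prime_iff_eq hq Nat.prime_two).mp h)
    have evenprod : ∀ R g : ℤ, R ≠ 0 → 17 * r ^ 2 - g ^ 2 ≠ 0 →
        N * R = 2 * (17 * r ^ 2 - g ^ 2) →
        Even (padicValNat q n + padicValNat q R.natAbs) := by
      intro R g hRne hDne hI
      have e1 : n * R.natAbs = 2 * (17 * r ^ 2 - g ^ 2).natAbs := by
        have h3 := congrArg Int.natAbs hI
        simpa [Int.natAbs_mul] using h3
      have e2 : padicValNat q (n * R.natAbs) =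
          padicValNat q n + padicValNat q R.natAbs :=
        padicValNat.mul hn0 (Int.natAbs_ne_zero.mpr hRne)
      have e3 : padicValNat q (2 * (17 * r ^ 2 - g ^ 2).natAbs)
          = padicValNat q (17 * r ^ 2 - g ^ 2).natAbs := by
        rw [padicValNat.mul two_ne_zero (Int.natAbs_ne_zero.mpr hDne),
          padicValNat.eq_zero_of_not_dvd hq2', zero_add]
      have e4 : Even (padicValNat q (17 * r ^ 2 - g ^ 2).natAbs) := by
        have hswap : (17 * r ^ 2 - g ^ 2).natAbs = (g ^ 2 - 17 * r ^ 2).natAbs := by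
          rw [← Int.natAbs_neg]
          congr 1
          ring
        rw [hswap]
        refine even_val17 hq hsq _ g r le_rfl ?_
        intro h0
        exact hDne (by linarith)
      rw [← e2, e1, e3] at *
      exact e4
    have hv1 := evenprod R1 g1 hR1ne hD1ne hI1
    have hv2 := evenprod R2 g2 hR2ne hD2ne hI2
    have hvR1_odd : ¬ Even (padicValNat q R1.natAbs) := fun h =>
      hvn_odd ((Nat.even_add.mp hv1).mpr h)
    have hvR2_odd : ¬ Even (padicValNat q R2.natAbs) := fun h =>
      hvn_odd ((Nat.even_add.mp hv2).mpr h)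
    have hqR1 : (q : ℤ) ∣ R1 := by
      by_contra h
      have hnd : ¬ (q ∣ R1.natAbs) := fun hh =>
        h (Int.dvd_natAbs.mp (Int.natCast_dvd_natCast.mpr hh))
      exact hvR1_odd (by rw [padicValNat.eq_zero_of_not_dvd hnd]; exact Even.zero)
    have hqR2 : (q : ℤ) ∣ R2 := by
      by_contra h
      have hnd : ¬ (q ∣ R2.natAbs) := fun hh =>
        h (Int.dvd_natAbs.mp (Int.natCast_dvd_natCast.mpr hh))
      exact hvR2_odd (by rw [padicValNat.eq_zero_of_not_dvd hnd]; exact Even.zero)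
    have hq2int : ¬ ((q : ℤ) ∣ 2) := by
      intro h
      exact hq2' (by exact_mod_cast h)
    have hqx : (q : ℤ) ∣ x := by
      have h2x : (q : ℤ) ∣ 2 * x ^ 2 := by
        have hsum : N + R2 = 2 * x ^ 2 := by rw [hNdef, hR2def]; ring
        rw [← hsum]
        exact dvd_add hqN hqR2
      rcases (hqint q hq).dvd_mul.mp h2x with h | h
      · exact absurd h hq2int
      · exact (hqint q hq).dvd_of_dvd_pow h
    have hqyz : (q : ℤ) ∣ y - z := by
      have hd : (q : ℤ) ∣ (y - z) ^ 2 := by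
        have hsum : (y - z) ^ 2 = N - x ^ 2 := by rw [hNdef]; ring
        rw [hsum]
        exact dvd_sub hqN (dvd_pow hqx two_ne_zero)
      exact (hqint q hq).dvd_of_dvd_pow hd
    have hqyz' : (q : ℤ) ∣ y + z := by
      have hd : (q : ℤ) ∣ (y + z) ^ 2 := by
        have hsum : (y + z) ^ 2 = R1 + x ^ 2 := by rw [hR1def]; ring
        rw [hsum]
        exact dvd_add hqR1 (dvd_pow hqx two_ne_zero)
      exact (hqint q hq).dvd_of_dvd_pow hd
    have hqy : (q : ℤ) ∣ y := by
      have h2y : (q : ℤ) ∣ 2 * y := by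
        have hsum : (y + z) + (y - z) = 2 * y := by ring
        rw [← hsum]
        exact dvd_add hqyz' hqyz
      rcases (hqint q hq).dvd_mul.mp h2y with h | h
      · exact absurd h hq2int
      · exact h
    have hqz : (q : ℤ) ∣ z := by
      have h2z : (q : ℤ) ∣ 2 * z := by
        have hsum : (y + z) - (y - z) = 2 * z := by ring
        rw [← hsum]
        exact dvd_sub hqyz' hqyz
      rcases (hqint q hq).dvd_mul.mp h2z with h | h
      · exact absurd h hq2int
      · exact h
    exact hgcd q hq ⟨hqx, hqy, hqz⟩
  have hJ1 : J((17 : ℤ) | M) = 1 := jacobi17_one M hModd key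
  have hMns : ¬ IsSquare ((M : ℤ) : ZMod 17) := by
    rintro ⟨s, hs⟩
    apply hQ
    have hsplit : 2 ^ n.factorization 2 * M = n := Nat.ordProj_mul_ordCompl_eq_self n 2
    have hcast : ((N : ℤ) : ZMod 17)
        = (2 : ZMod 17) ^ n.factorization 2 * ((M : ℕ) : ZMod 17) := by
      calc ((N : ℤ) : ZMod 17) = ((n : ℤ) : ZMod 17) := by rw [hnN]
        _ = ((n : ℕ) : ZMod 17) := by push_cast; ring
        _ = ((2 ^ n.factorization 2 * M : ℕ) : ZMod 17) := by rw [hsplit]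
        _ = (2 : ZMod 17) ^ n.factorization 2 * ((M : ℕ) : ZMod 17) := by push_cast; ring
    have hMcast : ((M : ℕ) : ZMod 17) = s * s := by
      have h5 : ((M : ℤ) : ZMod 17) = ((M : ℕ) : ZMod 17) := by push_cast; ring
      rw [← h5, hs]
    rw [hcast]
    exact (two_sq_zmod17.pow _).mul ⟨s, hMcast⟩
  have hrec : J(((17 : ℕ) : ℤ) | M) = J(((M : ℕ) : ℤ) | 17) :=
    jacobiSym.quadratic_reciprocity_one_mod_four (by norm_num) hModd
  have hleg : J((M : ℤ) | 17) = -1 := by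
    rw [← jacobiSym.legendreSym.to_jacobiSym]
    exact (legendreSym.eq_neg_one_iff 17).mpr hMns
  have h17cast : ((17 : ℕ) : ℤ) = (17 : ℤ) := by norm_num
  rw [h17cast, hJ1, hleg] at hrec
  exact absurd hrec (by norm_num)

private lemma rat_num_eq (q : ℚ) : (q.num : ℚ) = q * (q.den : ℚ) := by
  have hq : ((q.den : ℚ)) ≠ 0 := by
    exact_mod_cast q.den_nz
  calc (q.num : ℚ) = (q.num : ℚ) / (q.den : ℚ) * (q.den : ℚ) := by field_simp
    _ = q * (q.den : ℚ) := by rw [Rat.num_div_den]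

/-- The equation `w² = 34·x⁴ + 34·y⁴ + 34·z⁴` has no rational solution with
`(x, y, z) ≠ (0, 0, 0)`. -/
theorem no_rational_points_case_14 :
    ¬ ∃ w x y z : ℚ, w ^ 2 = (34) * x ^ 4 + (34) * y ^ 4 + (34) * z ^ 4 ∧
      (x, y, z) ≠ (0, 0, 0) := by
  rintro ⟨w, x, y, z, hw, hne⟩
  have hxyz : ¬(x = 0 ∧ y = 0 ∧ z = 0) := by
    intro ⟨h1, h2, h3⟩
    exact hne (by rw [h1, h2, h3])
  -- clear denominators
  set d : ℕ := x.den * y.den * z.den with hd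
  have hd0 : (d : ℚ) ≠ 0 := by
    have := x.den_nz; have := y.den_nz; have := z.den_nz
    simp only [hd]
    push_cast
    positivity
  set X : ℤ := x.num * ((y.den : ℤ) * (z.den : ℤ)) with hX
  set Y : ℤ := y.num * ((x.den : ℤ) * (z.den : ℤ)) with hY
  set Z : ℤ := z.num * ((x.den : ℤ) * (y.den : ℤ)) with hZ
  have hXQ : ((X : ℤ) : ℚ) = x * (d : ℚ) := by
    rw [hX, hd]
    push_cast
    rw [rat_num_eq x]
    ring
  have hYQ : ((Y : ℤ) : ℚ) = y * (d : ℚ) := by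
    rw [hY, hd]
    push_cast
    rw [rat_num_eq y]
    ring
  have hZQ : ((Z : ℤ) : ℚ) = z * (d : ℚ) := by
    rw [hZ, hd]
    push_cast
    rw [rat_num_eq z]
    ring
  set W : ℚ := w * (d : ℚ) ^ 2 with hW
  have hW2 : W ^ 2 = ((34 * (X ^ 4 + Y ^ 4 + Z ^ 4) : ℤ) : ℚ) := by
    push_cast
    rw [hXQ, hYQ, hZQ, hW]
    linear_combination ((d : ℚ) ^ 4) * hw
  have hWden : W.den = 1 := by
    have h1 : (W ^ 2).den = 1 := by rw [hW2]; exact Rat.den_intCast _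
    have h2 : W.den ^ 2 = 1 := by rw [← Rat.den_pow]; exact h1
    nlinarith [W.den_nz, Nat.pos_of_ne_zero W.den_nz]
  set W0 : ℤ := W.num with hW0
  have hWW0 : ((W0 : ℤ) : ℚ) = W := Rat.coe_int_num_of_den_eq_one hWden
  have hKint : W0 ^ 2 = 34 * (X ^ 4 + Y ^ 4 + Z ^ 4) := by
    have h3 : ((W0 ^ 2 : ℤ) : ℚ) = ((34 * (X ^ 4 + Y ^ 4 + Z ^ 4) : ℤ) : ℚ) := by
      push_cast
      rw [hWW0]
      push_cast at hW2
      linarith [hW2]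
    exact_mod_cast h3
  -- not all of X, Y, Z are zero
  have hXYZ : ¬(X = 0 ∧ Y = 0 ∧ Z = 0) := by
    intro ⟨h1, h2, h3⟩
    apply hxyz
    refine ⟨?_, ?_, ?_⟩
    · have := hXQ; rw [h1] at this; simpa [hd0] using this.symm
    · have := hYQ; rw [h2] at this; simpa [hd0] using this.symm
    · have := hZQ; rw [h3] at this; simpa [hd0] using this.symm
  -- divide by gcd
  set G1 : ℕ := Int.gcd Y Z with hG1
  set G : ℕ := Int.gcd X (G1 : ℤ) with hG
  have hG0 : G ≠ 0 := by
    intro h0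
    apply hXYZ
    rw [hG] at h0
    have h1 := Int.gcd_eq_zero_iff.mp h0
    have h2 : (G1 : ℤ) = 0 := h1.2
    have h3 : G1 = 0 := by exact_mod_cast h2
    have h4 := Int.gcd_eq_zero_iff.mp h3
    exact ⟨h1.1, h4.1, h4.2⟩
  have hdX : (G : ℤ) ∣ X := Int.gcd_dvd_left _ _
  have hdY : (G : ℤ) ∣ Y := by
    have h1 : (G : ℤ) ∣ (G1 : ℤ) := Int.gcd_dvd_right _ _
    exact h1.trans (Int.gcd_dvd_left _ _)
  have hdZ : (G : ℤ) ∣ Z := by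
    have h1 : (G : ℤ) ∣ (G1 : ℤ) := Int.gcd_dvd_right _ _
    exact h1.trans (Int.gcd_dvd_right _ _)
  obtain ⟨X1, hX1⟩ := hdX
  obtain ⟨Y1, hY1⟩ := hdY
  obtain ⟨Z1, hZ1⟩ := hdZ
  have hGZ : (G : ℤ) ≠ 0 := by exact_mod_cast hG0
  have hW0dvd : ((G : ℤ) ^ 2) ∣ W0 := by
    have h1 : ((G : ℤ) ^ 2) ^ 2 ∣ W0 ^ 2 := by
      rw [hKint, hX1, hY1, hZ1]
      exact ⟨34 * (X1 ^ 4 + Y1 ^ 4 + Z1 ^ 4), by ring⟩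
    exact (Int.pow_dvd_pow_iff two_ne_zero).mp h1
  obtain ⟨W1, hW1⟩ := hW0dvd
  have hE1 : W1 ^ 2 = 34 * (X1 ^ 4 + Y1 ^ 4 + Z1 ^ 4) := by
    have h1 : ((G : ℤ) ^ 2) ^ 2 * W1 ^ 2 = ((G : ℤ) ^ 2) ^ 2 * (34 * (X1 ^ 4 + Y1 ^ 4 + Z1 ^ 4)) := by
      rw [← mul_pow, ← hW1, hKint, hX1, hY1, hZ1]
      ring
    exact mul_left_cancel₀ (pow_ne_zero _ (pow_ne_zero _ hGZ)) h1
  -- extract 17 and 2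
  have h17p : Prime (17 : ℤ) := by
    rw [Int.prime_iff_natAbs_prime]
    norm_num
  have h2p : Prime (2 : ℤ) := Int.prime_two
  have h17W1 : (17 : ℤ) ∣ W1 := by
    apply h17p.dvd_of_dvd_pow (n := 2)
    rw [hE1]
    exact ⟨2 * (X1 ^ 4 + Y1 ^ 4 + Z1 ^ 4), by ring⟩
  obtain ⟨a, ha⟩ := h17W1
  have hEa : 17 * a ^ 2 = 2 * (X1 ^ 4 + Y1 ^ 4 + Z1 ^ 4) := by
    have h1 : 17 * (17 * a ^ 2) = 17 * (2 * (X1 ^ 4 + Y1 ^ 4 + Z1 ^ 4)) := by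
      linear_combination hE1 - (W1 + 17 * a) * ha
    exact mul_left_cancel₀ (by norm_num : (17:ℤ) ≠ 0) h1
  have h2a : (2 : ℤ) ∣ a := by
    have h1 : (2 : ℤ) ∣ 17 * a ^ 2 := by
      rw [hEa]
      exact ⟨X1 ^ 4 + Y1 ^ 4 + Z1 ^ 4, rfl⟩
    rcases h2p.dvd_mul.mp h1 with h | h
    · norm_num at h
    · exact h2p.dvd_of_dvd_pow h
  obtain ⟨b, hb⟩ := h2a
  have hE2 : X1 ^ 4 + Y1 ^ 4 + Z1 ^ 4 = 34 * b ^ 2 := by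
    have h1 : 2 * (X1 ^ 4 + Y1 ^ 4 + Z1 ^ 4) = 2 * (34 * b ^ 2) := by
      linear_combination -hEa + 17 * (a + 2 * b) * hb
    exact mul_left_cancel₀ (by norm_num : (2:ℤ) ≠ 0) h1
  -- primitivity
  have hprim : ∀ p : ℕ, p.Prime → ¬((p : ℤ) ∣ X1 ∧ (p : ℤ) ∣ Y1 ∧ (p : ℤ) ∣ Z1) := by
    intro p hp ⟨hpX, hpY, hpZ⟩
    have hdX' : ((G * p : ℕ) : ℤ) ∣ X := by
      rw [hX1]; push_cast
      exact mul_dvd_mul_left _ hpX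
    have hdY' : ((G * p : ℕ) : ℤ) ∣ Y := by
      rw [hY1]; push_cast
      exact mul_dvd_mul_left _ hpY
    have hdZ' : ((G * p : ℕ) : ℤ) ∣ Z := by
      rw [hZ1]; push_cast
      exact mul_dvd_mul_left _ hpZ
    have hdG1 : ((G * p : ℕ) : ℤ) ∣ (G1 : ℤ) := Int.dvd_coe_gcd hdY' hdZ'
    have hdG : ((G * p : ℕ) : ℤ) ∣ (G : ℤ) := Int.dvd_coe_gcd hdX' hdG1
    have hnat : G * p ∣ G := by exact_mod_cast hdG
    have hle : G * p ≤ G := Nat.le_of_dvd (Nat.pos_of_ne_zero hG0) hnat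
    have hple : p ≤ 1 := by
      by_contra hc
      push_neg at hc
      nlinarith [Nat.pos_of_ne_zero hG0]
    have h2p := hp.two_le
    omega
  -- reduce mod 17
  have hmod : ((X1 : ZMod 17)) ^ 4 + ((Y1 : ZMod 17)) ^ 4 + ((Z1 : ZMod 17)) ^ 4 = 0 := by
    have h1 := congrArg (fun t : ℤ => ((t : ZMod 17))) hE2
    push_cast at h1
    rw [h1]
    have h34 : (34 : ZMod 17) = 0 := by decide
    rw [h34]
    ring
  have hnz : ¬(((X1 : ZMod 17)) = 0 ∧ ((Y1 : ZMod 17)) = 0 ∧ ((Z1 : ZMod 17)) = 0) := by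
    intro ⟨h1, h2, h3⟩
    exact hprim 17 (by norm_num)
      ⟨(ZMod.intCast_zmod_eq_zero_iff_dvd X1 17).mp h1,
       (ZMod.intCast_zmod_eq_zero_iff_dvd Y1 17).mp h2,
       (ZMod.intCast_zmod_eq_zero_iff_dvd Z1 17).mp h3⟩
  rcases sel17 _ _ _ hmod hnz with h | h | h
  · refine core X1 Y1 Z1 b hE2 hprim ?_
    have hc : ((X1 ^ 2 + (Y1 - Z1) ^ 2 : ℤ) : ZMod 17)
        = (X1 : ZMod 17) ^ 2 + ((Y1 : ZMod 17) - (Z1 : ZMod 17)) ^ 2 := by push_cast; ring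
    rw [hc]
    exact h
  · refine core Y1 Z1 X1 b (by linear_combination hE2) (fun p hp ⟨h1, h2, h3⟩ =>
      hprim p hp ⟨h3, h1, h2⟩) ?_
    have hc : ((Y1 ^ 2 + (Z1 - X1) ^ 2 : ℤ) : ZMod 17)
        = (Y1 : ZMod 17) ^ 2 + ((Z1 : ZMod 17) - (X1 : ZMod 17)) ^ 2 := by push_cast; ring
    rw [hc]
    exact h
  · refine core Z1 X1 Y1 b (by linear_combination hE2) (fun p hp ⟨h1, h2, h3⟩ =>
      hprim p hp ⟨h2, h3, h1⟩) ?_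
    have hc : ((Z1 ^ 2 + (X1 - Y1) ^ 2 : ℤ) : ZMod 17)
        = (Z1 : ZMod 17) ^ 2 + ((X1 : ZMod 17) - (Y1 : ZMod 17)) ^ 2 := by push_cast; ring
    rw [hc]
    exact h
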